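/- arXiv:2312.16704 — 2 statements merged into one kernel-verified Lean document; each statement's English description precedes it below -/
import Mathlib

section
/- (Non-granularity of the YWIC lower approximation.) Let X = {x₁,…,x₅}, a = (1, 0.5, 1, 0, 0), R(x,y) = 1 − |a(x) − a(y)| (a T_L-equivalence relation), and A = (1, 1, 1, 0, 0). For y ∈ X let g_y(x) = I_L(R(x,y), A(x)) and define the YWIC lower approximation of A with identity RIM quantifier by L(y) = (Σ_{i=1}^{5} sᵢ(g_y)·t_{6−i}(R(·,y))) / (Σ_{x∈X} R(x,y)), where sᵢ(g_y) denotes the i-th smallest of the five values g_y(x) and t_j(R(·,y)) denotes the j-th smallest of the five values R(x,y). Then L = (1, 0.75, 1, 0.2, 0.2), while min_{x∈X} I_L(R(x,x₂), L(x)) = 0.7 ≠ 0.75 = L(x₂); hence L is not a fixed point of the classical lower approximation and in particular L is not granularly representable w.r.t. R. -/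
/-- The Łukasiewicz t-norm. -/
noncomputable def TL (x y : ℝ) : ℝ := max 0 (x + y - 1)

/-- The Łukasiewicz (residual) implicator. -/
noncomputable def IL (x y : ℝ) : ℝ := min 1 (1 - x + y)

/-- `R` is a `T`-equivalence relation: a `[0,1]`-valued reflexive, symmetric and
`T`-transitive fuzzy relation. -/
structure IsTEquiv {X : Type*} (T : ℝ → ℝ → ℝ) (R : X → X → ℝ) : Prop where
  mem : ∀ x y, R x y ∈ Set.Icc (0:ℝ) 1
  refl : ∀ x, R x x = 1
  symm : ∀ x y, R x y = R y x
  trans : ∀ x y z, T (R x y) (R y z) ≤ R x z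

/-- `A` is granularly representable w.r.t. `T` and `R`: for every `y`,
`A(y)` is the supremum of the values `T(λ, R(x,y))` over all granules
`R_λ(x) = (z ↦ T(λ, R(x,z)))` that are (pointwise) contained in `A`. -/
def GranRep {X : Type*} (T : ℝ → ℝ → ℝ) (R : X → X → ℝ) (A : X → ℝ) : Prop :=
  ∀ y, A y = sSup {v | ∃ l ∈ Set.Icc (0:ℝ) 1, ∃ x, (∀ z, T l (R x z) ≤ A z) ∧ v = T l (R x y)}

/-- `sortVal g i` is the (0-indexed) `i`-th smallest of the values of `g`. -/
noncomputable def sortVal {n : ℕ} (g : Fin n → ℝ) (i : Fin n) : ℝ := g (Tuple.sort g i)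

lemma sortVal_eq {n : ℕ} (g : Fin n → ℝ) (σ : Equiv.Perm (Fin n))
    (h : Monotone (g ∘ σ)) (i : Fin n) : sortVal g i = g (σ i) := by
  have := (Tuple.comp_sort_eq_comp_iff_monotone (f := g) (σ := σ)).2 h
  exact (congrFun this i).symm

lemma mono5 (v : Fin 5 → ℝ) (h01 : v 0 ≤ v 1) (h12 : v 1 ≤ v 2)
    (h23 : v 2 ≤ v 3) (h34 : v 3 ≤ v 4) : Monotone v := by
  intro i j hij
  fin_cases i <;> fin_cases j <;> simp_all <;> linarith

/-- build a permutation of `Fin 5` from explicit data -/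
def pm (f g : Fin 5 → Fin 5) (h1 : ∀ i, g (f i) = i) (h2 : ∀ i, f (g i) = i) :
    Equiv.Perm (Fin 5) := ⟨f, g, h1, h2⟩

lemma rev0 : (0:Fin 5).rev = 4 := rfl
lemma rev1 : (1:Fin 5).rev = 3 := rfl
lemma rev2 : (2:Fin 5).rev = 2 := rfl
lemma rev3 : (3:Fin 5).rev = 1 := rfl
lemma rev4 : (4:Fin 5).rev = 0 := rfl

set_option maxHeartbeats 2000000 in
/-- the YWIC lower approximation (identity RIM quantifier) of
`A = (1,1,1,0,0)` w.r.t. the given `T_L`-equivalence relation on a 5-element set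
equals `(1, 0.75, 1, 0.2, 0.2)` and is neither a fixed point of the classical lower
approximation nor granularly representable. (`sᵢ(g) = sortVal g (i-1)` is the `i`-th
smallest value of `g`, and `t_{6-i}` pairs it with `sortVal _ (i-1).rev`.) -/
theorem stmt17 :
    let a : Fin 5 → ℝ := ![1, 1/2, 1, 0, 0]
    let R : Fin 5 → Fin 5 → ℝ := fun x y => 1 - |a x - a y|
    let A : Fin 5 → ℝ := ![1, 1, 1, 0, 0]
    let L : Fin 5 → ℝ := fun y =>
      (∑ i : Fin 5, sortVal (fun x => IL (R x y) (A x)) i * sortVal (fun x => R x y) i.rev) /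
        (∑ x, R x y)
    IsTEquiv TL R ∧
    L = ![1, 3/4, 1, 1/5, 1/5] ∧
    Finset.univ.inf' Finset.univ_nonempty (fun x => IL (R x 1) (L x)) = 7/10 ∧
    L 1 = 3/4 ∧
    Finset.univ.inf' Finset.univ_nonempty (fun x => IL (R x 1) (L x)) ≠ L 1 ∧
    ¬ GranRep TL R L := by
  intro a R A L
  have hab : ∀ x y : Fin 5, |a x - a y| ≤ 1 := by
    intro x y
    rw [abs_sub_le_iff]
    constructor <;> (fin_cases x <;> fin_cases y <;> norm_num [a])
  have hEq : IsTEquiv TL R := by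
    constructor
    · intro x y
      have h1 := hab x y
      have h2 := abs_nonneg (a x - a y)
      exact ⟨by simp only [R]; linarith, by simp only [R]; linarith⟩
    · intro x; simp [R]
    · intro x y; simp only [R]; rw [abs_sub_comm]
    · intro x y z
      have h1 := hab x z
      have h2 := abs_sub_le (a x) (a y) (a z)
      simp only [TL, R]
      apply max_le <;> linarith
  have hL : L = ![1, 3/4, 1, 1/5, 1/5] := by
    funext y
    fin_cases y
    · show L 0 = 1
      simp only [L]
      have hgf : (fun x => IL (R x 0) (A x)) = ![1,1,1,1,1] := by
        funext x; fin_cases x <;> simp [IL, R, A, a, abs_of_nonneg, abs_of_nonpos] <;> norm_num [IL, R, A, a, abs_of_nonneg, abs_of_nonpos]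
      have hrf : (fun x => R x 0) = ![1,1/2,1,0,0] := by
        funext x; fin_cases x <;> simp [R, a, abs_of_nonneg, abs_of_nonpos] <;> norm_num [R, a, abs_of_nonneg, abs_of_nonpos]
      have hmg : Monotone ((![1,1,1,1,1] : Fin 5 → ℝ) ∘ pm ![0,1,2,3,4] ![0,1,2,3,4] (by decide) (by decide)) := by
        apply mono5 <;> simp [pm] <;> norm_num [pm]
      have hmr : Monotone ((![1,1/2,1,0,0] : Fin 5 → ℝ) ∘ pm ![3,4,1,0,2] ![3,2,4,0,1] (by decide) (by decide)) := by
        apply mono5 <;> simp [pm] <;> norm_num [pm]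
      rw [hgf, hrf, Fin.sum_univ_five, Fin.sum_univ_five]
      rw [rev0, rev1, rev2, rev3, rev4]
      simp only [sortVal_eq _ _ hmg, sortVal_eq _ _ hmr]
      simp [pm, R, a, abs_of_nonneg, abs_of_nonpos] <;> norm_num [pm, R, a, abs_of_nonneg, abs_of_nonpos]
    · show L 1 = 3/4
      simp only [L]
      have hgf : (fun x => IL (R x 1) (A x)) = ![1,1,1,1/2,1/2] := by
        funext x; fin_cases x <;> simp [IL, R, A, a, abs_of_nonneg, abs_of_nonpos] <;> norm_num [IL, R, A, a, abs_of_nonneg, abs_of_nonpos]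
      have hrf : (fun x => R x 1) = ![1/2,1,1/2,1/2,1/2] := by
        funext x; fin_cases x <;> simp [R, a, abs_of_nonneg, abs_of_nonpos] <;> norm_num [R, a, abs_of_nonneg, abs_of_nonpos]
      have hmg : Monotone ((![1,1,1,1/2,1/2] : Fin 5 → ℝ) ∘ pm ![3,4,0,1,2] ![2,3,4,0,1] (by decide) (by decide)) := by
        apply mono5 <;> simp [pm] <;> norm_num [pm]
      have hmr : Monotone ((![1/2,1,1/2,1/2,1/2] : Fin 5 → ℝ) ∘ pm ![0,2,3,4,1] ![0,4,1,2,3] (by decide) (by decide)) := by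
        apply mono5 <;> simp [pm] <;> norm_num [pm]
      rw [hgf, hrf, Fin.sum_univ_five, Fin.sum_univ_five]
      rw [rev0, rev1, rev2, rev3, rev4]
      simp only [sortVal_eq _ _ hmg, sortVal_eq _ _ hmr]
      simp [pm, R, a, abs_of_nonneg, abs_of_nonpos] <;> norm_num [pm, R, a, abs_of_nonneg, abs_of_nonpos]
    · show L 2 = 1
      simp only [L]
      have hgf : (fun x => IL (R x 2) (A x)) = ![1,1,1,1,1] := by
        funext x; fin_cases x <;> simp [IL, R, A, a, abs_of_nonneg, abs_of_nonpos] <;> norm_num [IL, R, A, a, abs_of_nonneg, abs_of_nonpos]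
      have hrf : (fun x => R x 2) = ![1,1/2,1,0,0] := by
        funext x; fin_cases x <;> simp [R, a, abs_of_nonneg, abs_of_nonpos] <;> norm_num [R, a, abs_of_nonneg, abs_of_nonpos]
      have hmg : Monotone ((![1,1,1,1,1] : Fin 5 → ℝ) ∘ pm ![0,1,2,3,4] ![0,1,2,3,4] (by decide) (by decide)) := by
        apply mono5 <;> simp [pm] <;> norm_num [pm]
      have hmr : Monotone ((![1,1/2,1,0,0] : Fin 5 → ℝ) ∘ pm ![3,4,1,0,2] ![3,2,4,0,1] (by decide) (by decide)) := by
        apply mono5 <;> simp [pm] <;> norm_num [pm]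
      rw [hgf, hrf, Fin.sum_univ_five, Fin.sum_univ_five]
      rw [rev0, rev1, rev2, rev3, rev4]
      simp only [sortVal_eq _ _ hmg, sortVal_eq _ _ hmr]
      simp [pm, R, a, abs_of_nonneg, abs_of_nonpos] <;> norm_num [pm, R, a, abs_of_nonneg, abs_of_nonpos]
    · show L 3 = 1/5
      simp only [L]
      have hgf : (fun x => IL (R x 3) (A x)) = ![1,1,1,0,0] := by
        funext x; fin_cases x <;> simp [IL, R, A, a, abs_of_nonneg, abs_of_nonpos] <;> norm_num [IL, R, A, a, abs_of_nonneg, abs_of_nonpos]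
      have hrf : (fun x => R x 3) = ![0,1/2,0,1,1] := by
        funext x; fin_cases x <;> simp [R, a, abs_of_nonneg, abs_of_nonpos] <;> norm_num [R, a, abs_of_nonneg, abs_of_nonpos]
      have hmg : Monotone ((![1,1,1,0,0] : Fin 5 → ℝ) ∘ pm ![3,4,0,1,2] ![2,3,4,0,1] (by decide) (by decide)) := by
        apply mono5 <;> simp [pm] <;> norm_num [pm]
      have hmr : Monotone ((![0,1/2,0,1,1] : Fin 5 → ℝ) ∘ pm ![0,2,1,3,4] ![0,2,1,3,4] (by decide) (by decide)) := by
        apply mono5 <;> simp [pm] <;> norm_num [pm]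
      rw [hgf, hrf, Fin.sum_univ_five, Fin.sum_univ_five]
      rw [rev0, rev1, rev2, rev3, rev4]
      simp only [sortVal_eq _ _ hmg, sortVal_eq _ _ hmr]
      simp [pm, R, a, abs_of_nonneg, abs_of_nonpos] <;> norm_num [pm, R, a, abs_of_nonneg, abs_of_nonpos]
    · show L 4 = 1/5
      simp only [L]
      have hgf : (fun x => IL (R x 4) (A x)) = ![1,1,1,0,0] := by
        funext x; fin_cases x <;> simp [IL, R, A, a, abs_of_nonneg, abs_of_nonpos] <;> norm_num [IL, R, A, a, abs_of_nonneg, abs_of_nonpos]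
      have hrf : (fun x => R x 4) = ![0,1/2,0,1,1] := by
        funext x; fin_cases x <;> simp [R, a, abs_of_nonneg, abs_of_nonpos] <;> norm_num [R, a, abs_of_nonneg, abs_of_nonpos]
      have hmg : Monotone ((![1,1,1,0,0] : Fin 5 → ℝ) ∘ pm ![3,4,0,1,2] ![2,3,4,0,1] (by decide) (by decide)) := by
        apply mono5 <;> simp [pm] <;> norm_num [pm]
      have hmr : Monotone ((![0,1/2,0,1,1] : Fin 5 → ℝ) ∘ pm ![0,2,1,3,4] ![0,2,1,3,4] (by decide) (by decide)) := by
        apply mono5 <;> simp [pm] <;> norm_num [pm]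
      rw [hgf, hrf, Fin.sum_univ_five, Fin.sum_univ_five]
      rw [rev0, rev1, rev2, rev3, rev4]
      simp only [sortVal_eq _ _ hmg, sortVal_eq _ _ hmr]
      simp [pm, R, a, abs_of_nonneg, abs_of_nonpos] <;> norm_num [pm, R, a, abs_of_nonneg, abs_of_nonpos]
  have hL1 : L 1 = 3/4 := by rw [hL]; norm_num
  have hinf : Finset.univ.inf' Finset.univ_nonempty (fun x => IL (R x 1) (L x)) = 7/10 := by
    apply le_antisymm
    · refine le_trans (Finset.inf'_le _ (Finset.mem_univ 3)) ?_
      rw [hL]; simp [IL, R, a, abs_of_nonneg, abs_of_nonpos] <;> norm_num [IL, R, a, abs_of_nonneg, abs_of_nonpos]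
    · apply Finset.le_inf'
      intro x _
      fin_cases x <;> (rw [hL]; simp [IL, R, a, abs_of_nonneg, abs_of_nonpos] <;> norm_num [IL, R, a, abs_of_nonneg, abs_of_nonpos])
  refine ⟨hEq, hL, hinf, hL1, by rw [hinf, hL1]; norm_num, ?_⟩
  intro hGR
  have h2 := hGR 1
  rw [hL1] at h2
  have hub : sSup {v | ∃ l ∈ Set.Icc (0:ℝ) 1, ∃ x,
      (∀ z, TL l (R x z) ≤ L z) ∧ v = TL l (R x 1)} ≤ 7/10 := by
    apply Real.sSup_le _ (by norm_num)
    rintro v ⟨l, ⟨hl0, hl1⟩, x, hcons, rfl⟩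
    fin_cases x
    · show TL l (R 0 1) ≤ 7/10
      have : R 0 1 = 1/2 := by simp [R, a, abs_of_nonneg, abs_of_nonpos] <;> norm_num [R, a, abs_of_nonneg, abs_of_nonpos]
      rw [this]; simp only [TL]; apply max_le <;> norm_num <;> linarith
    · show TL l (R 1 1) ≤ 7/10
      have hc : TL l (R 1 3) ≤ L 3 := hcons 3
      have hr13 : R 1 3 = 1/2 := by simp [R, a, abs_of_nonneg, abs_of_nonpos] <;> norm_num [R, a, abs_of_nonneg, abs_of_nonpos]
      have hL3 : L 3 = 1/5 := by rw [hL]; simp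
      rw [hr13, hL3] at hc
      simp only [TL] at hc ⊢
      have hle : l + 1/2 - 1 ≤ 1/5 := le_trans (le_max_right _ _) hc
      have : R 1 1 = 1 := by simp [R, a, abs_of_nonneg, abs_of_nonpos] <;> norm_num [R, a, abs_of_nonneg, abs_of_nonpos]
      rw [this]; apply max_le <;> norm_num <;> linarith
    · show TL l (R 2 1) ≤ 7/10
      have : R 2 1 = 1/2 := by simp [R, a, abs_of_nonneg, abs_of_nonpos] <;> norm_num [R, a, abs_of_nonneg, abs_of_nonpos]
      rw [this]; simp only [TL]; apply max_le <;> norm_num <;> linarith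
    · show TL l (R 3 1) ≤ 7/10
      have : R 3 1 = 1/2 := by simp [R, a, abs_of_nonneg, abs_of_nonpos] <;> norm_num [R, a, abs_of_nonneg, abs_of_nonpos]
      rw [this]; simp only [TL]; apply max_le <;> norm_num <;> linarith
    · show TL l (R 4 1) ≤ 7/10
      have : R 4 1 = 1/2 := by simp [R, a, abs_of_nonneg, abs_of_nonpos] <;> norm_num [R, a, abs_of_nonneg, abs_of_nonpos]
      rw [this]; simp only [TL]; apply max_le <;> norm_num <;> linarith
  rw [← h2] at hub
  norm_num at hub
end

section
/- (Non-granularity of the WOWAS lower approximation.) Let X = {x₁,…,x₅}, a = (0.8, 0, 0, 0, 1), R(x,y) = 1 − |a(x) − a(y)| (a T_L-equivalence relation), and A = (1, 1, 0.5, 0.5, 0). For y ∈ X let g_y(x) = I_L(R(x,y), A(x)), let C_y(x) = R(x,y), and define the WOWAS lower approximation of A with identity RIM quantifier by L(y) = ⨍ g_y dμ_{C_y}, the Sugeno integral of g_y w.r.t. the monotone measure μ_{C_y}(E) = (Σ_{x∈E} C_y(x)) / (Σ_{x∈X} C_y(x)). Then L = (2/3, 1/2, 1/2, 1/2, 4/9),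 while min_{x∈X} I_L(R(x,x₁), L(x)) = 29/45 ≠ 2/3 = L(x₁); hence L is not a fixed point of the classical lower approximation and in particular L is not granularly representable w.r.t. R. -/
/-- A monotone measure on a finite set `X`. -/
structure IsMonotoneMeasure {X : Type*} (μ : Set X → ℝ) : Prop where
  empty : μ ∅ = 0
  univ : μ Set.univ = 1
  mono : ∀ E F : Set X, E ⊆ F → μ E ≤ μ F

/-- The Sugeno integral of `f : X → ℝ` w.r.t. `μ` on the finite nonempty set `X`:
`max_i min(μ(A*_i), f(x*_i))` where `x*` enumerates `X` with
`f(x*_1) ≤ … ≤ f(x*_n)` and `A*_i = {x*_i, …, x*_n}`. -/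
noncomputable def sugeno {X : Type*} [Fintype X] [Nonempty X] (μ : Set X → ℝ) (f : X → ℝ) : ℝ :=
  let e : Fin (Fintype.card X) ≃ X := (Fintype.equivFin X).symm
  let σ : Equiv.Perm (Fin (Fintype.card X)) := Tuple.sort (f ∘ e)
  haveI : Nonempty (Fin (Fintype.card X)) := Fin.pos_iff_nonempty.mp Fintype.card_pos
  Finset.univ.sup' Finset.univ_nonempty
    (fun i => min (μ {x | ∃ j, i ≤ j ∧ e (σ j) = x}) (f (e (σ i))))

lemma sugeno_eq_sup' {X : Type*} [Fintype X] [Nonempty X] (μ : Set X → ℝ)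
    (hμ : ∀ E F : Set X, E ⊆ F → μ E ≤ μ F) (f : X → ℝ) :
    sugeno μ f = Finset.univ.sup' Finset.univ_nonempty
      (fun x => min (μ {y | f x ≤ f y}) (f x)) := by
  classical
  unfold sugeno
  set e : Fin (Fintype.card X) ≃ X := (Fintype.equivFin X).symm with he
  set σ : Equiv.Perm (Fin (Fintype.card X)) := Tuple.sort (f ∘ e) with hσ
  haveI : Nonempty (Fin (Fintype.card X)) := Fin.pos_iff_nonempty.mp Fintype.card_pos
  have hmono : Monotone (fun i => f (e (σ i))) := Tuple.monotone_sort (f ∘ e)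
  apply le_antisymm
  · apply Finset.sup'_le
    intro i _
    refine le_trans ?_ (Finset.le_sup' (f := fun x => min (μ {y | f x ≤ f y}) (f x))
      (Finset.mem_univ (e (σ i))))
    apply min_le_min _ le_rfl
    apply hμ
    rintro y ⟨j, hij, rfl⟩
    exact hmono hij
  · apply Finset.sup'_le
    intro x _
    have hx : ∃ j, f x ≤ f (e (σ j)) := ⟨σ⁻¹ (e.symm x), by simp⟩
    set T : Finset (Fin (Fintype.card X)) := Finset.univ.filter (fun j => f x ≤ f (e (σ j))) with hT
    have hTne : T.Nonempty := ⟨hx.choose, by simp [hT, hx.choose_spec]⟩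
    set i := T.min' hTne with hi
    have hiT : i ∈ T := T.min'_mem hTne
    have hfi : f x ≤ f (e (σ i)) := by simpa [hT] using hiT
    refine le_trans ?_ (Finset.le_sup' (b := i)
      (f := fun i => min (μ {x | ∃ j, i ≤ j ∧ e (σ j) = x}) (f (e (σ i)))) (Finset.mem_univ i))
    apply min_le_min _ hfi
    apply hμ
    intro y hy
    refine ⟨σ⁻¹ (e.symm y), ?_, by simp⟩
    apply T.min'_le
    simp only [hT, Finset.mem_filter, Finset.mem_univ, true_and]
    simpa using hy

lemma sup5 (g : Fin 5 → ℝ) :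
    Finset.univ.sup' Finset.univ_nonempty g
      = max (g 0) (max (g 1) (max (g 2) (max (g 3) (g 4)))) := by
  have h : (Finset.univ : Finset (Fin 5)) = {0, 1, 2, 3, 4} := by decide
  rw [Finset.sup'_congr _ h (fun _ _ => rfl)]
  simp [Finset.sup'_insert]

lemma inf5 (g : Fin 5 → ℝ) :
    Finset.univ.inf' Finset.univ_nonempty g
      = min (g 0) (min (g 1) (min (g 2) (min (g 3) (g 4)))) := by
  have h : (Finset.univ : Finset (Fin 5)) = {0, 1, 2, 3, 4} := by decide
  rw [Finset.inf'_congr _ h (fun _ _ => rfl)]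
  simp [Finset.inf'_insert]

lemma mu_eval {X : Type*} (g : X → ℝ) (t : ℝ) (E : Set X) [Fintype X] (s : Finset X)
    (h : ∀ z, z ∈ E ↔ z ∈ s) :
    (∑ x ∈ E.toFinite.toFinset, g x) / t = (∑ x ∈ s, g x) / t := by
  congr 1
  apply Finset.sum_congr _ (fun _ _ => rfl)
  ext z
  simp [Set.Finite.mem_toFinset, h]


lemma key_top (R : Fin 5 → Fin 5 → ℝ) (A : Fin 5 → ℝ)
    (hμmono : ∀ y : Fin 5, ∀ E F : Set (Fin 5), E ⊆ F →
      (∑ x ∈ E.toFinite.toFinset, R x y) / (∑ x, R x y)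
        ≤ (∑ x ∈ F.toFinite.toFinset, R x y) / (∑ x, R x y)) :
    ∀ (y : Fin 5) (s0 s1 s2 s3 s4 : Finset (Fin 5)),
      (∀ z : Fin 5, IL (R 0 y) (A 0) ≤ IL (R z y) (A z) ↔ z ∈ s0) →
      (∀ z : Fin 5, IL (R 1 y) (A 1) ≤ IL (R z y) (A z) ↔ z ∈ s1) →
      (∀ z : Fin 5, IL (R 2 y) (A 2) ≤ IL (R z y) (A z) ↔ z ∈ s2) →
      (∀ z : Fin 5, IL (R 3 y) (A 3) ≤ IL (R z y) (A z) ↔ z ∈ s3) →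
      (∀ z : Fin 5, IL (R 4 y) (A 4) ≤ IL (R z y) (A z) ↔ z ∈ s4) →
      sugeno (fun E => (∑ x ∈ E.toFinite.toFinset, R x y) / (∑ x, R x y))
        (fun x => IL (R x y) (A x))
        = max (min ((∑ x ∈ s0, R x y) / (∑ x, R x y)) (IL (R 0 y) (A 0)))
            (max (min ((∑ x ∈ s1, R x y) / (∑ x, R x y)) (IL (R 1 y) (A 1)))
            (max (min ((∑ x ∈ s2, R x y) / (∑ x, R x y)) (IL (R 2 y) (A 2)))
            (max (min ((∑ x ∈ s3, R x y) / (∑ x, R x y)) (IL (R 3 y) (A 3)))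
                 (min ((∑ x ∈ s4, R x y) / (∑ x, R x y)) (IL (R 4 y) (A 4)))))) := by
  intro y s0 s1 s2 s3 s4 h0 h1 h2 h3 h4
  rw [sugeno_eq_sup' _ (hμmono y), sup5]
  rw [mu_eval _ _ _ s0 h0]
  rw [mu_eval _ _ _ s1 h1]
  rw [mu_eval _ _ _ s2 h2]
  rw [mu_eval _ _ _ s3 h3]
  rw [mu_eval _ _ _ s4 h4]


lemma sum4 (g : Fin 5 → ℝ) : ∑ x ∈ ({0,1,2,3} : Finset (Fin 5)), g x = g 0 + g 1 + g 2 + g 3 := by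
  rw [Finset.sum_insert (by decide), Finset.sum_insert (by decide),
    Finset.sum_insert (by decide), Finset.sum_singleton]
  ring

lemma sum014 (g : Fin 5 → ℝ) : ∑ x ∈ ({0,1,4} : Finset (Fin 5)), g x = g 0 + g 1 + g 4 := by
  rw [Finset.sum_insert (by decide), Finset.sum_insert (by decide), Finset.sum_singleton]
  ring

lemma sumall (g : Fin 5 → ℝ) :
    ∑ x ∈ ({0,1,2,3,4} : Finset (Fin 5)), g x = g 0 + g 1 + g 2 + g 3 + g 4 := by
  rw [Finset.sum_insert (by decide), Finset.sum_insert (by decide),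
    Finset.sum_insert (by decide), Finset.sum_insert (by decide), Finset.sum_singleton]
  ring

set_option maxHeartbeats 1000000 in
/-- the WOWAS lower approximation (identity RIM quantifier) of
`A = (1,1,0.5,0.5,0)` w.r.t. the given `T_L`-equivalence relation on a 5-element set
equals `(2/3, 1/2, 1/2, 1/2, 4/9)` and is neither a fixed point of the classical lower
approximation nor granularly representable. -/
theorem stmt18 :
    let a : Fin 5 → ℝ := ![4/5, 0, 0, 0, 1]
    let R : Fin 5 → Fin 5 → ℝ := fun x y => 1 - |a x - a y|
    let A : Fin 5 → ℝ := ![1, 1, 1/2, 1/2, 0]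
    let L : Fin 5 → ℝ := fun y =>
      sugeno (fun E => (∑ x ∈ E.toFinite.toFinset, R x y) / (∑ x, R x y))
        (fun x => IL (R x y) (A x))
    IsTEquiv TL R ∧
    L = ![2/3, 1/2, 1/2, 1/2, 4/9] ∧
    Finset.univ.inf' Finset.univ_nonempty (fun x => IL (R x 0) (L x)) = 29/45 ∧
    L 0 = 2/3 ∧
    Finset.univ.inf' Finset.univ_nonempty (fun x => IL (R x 0) (L x)) ≠ L 0 ∧
    ¬ GranRep TL R L := by
  intro a R A L
  have hR : ∀ x y, R x y =
      ![![(1:ℝ),1/5,1/5,1/5,4/5],![1/5,1,1,1,0],![1/5,1,1,1,0],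
        ![1/5,1,1,1,0],![4/5,0,0,0,1]] x y := by
    intro x y
    fin_cases x <;> fin_cases y <;> norm_num [R, a, abs_of_nonneg, abs_of_nonpos]
  have hRnn : ∀ x y, 0 ≤ R x y := by
    intro x y; rw [hR]; fin_cases x <;> fin_cases y <;> norm_num
  have habs : ∀ x y : Fin 5, |a x - a y| ≤ 1 := by
    intro x y; fin_cases x <;> fin_cases y <;>
      norm_num [a, abs_of_nonneg, abs_of_nonpos]
  have hequiv : IsTEquiv TL R := by
    constructor
    · intro x y
      refine ⟨hRnn x y, ?_⟩
      simp only [R]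
      have := abs_nonneg (a x - a y); linarith
    · intro x; simp [R]
    · intro x y; simp [R, abs_sub_comm]
    · intro x y z
      simp only [TL, R]
      apply max_le
      · have := habs x z; linarith
      · have := abs_sub_le (a x) (a y) (a z); linarith
  have hμmono : ∀ y : Fin 5, ∀ E F : Set (Fin 5), E ⊆ F →
      (∑ x ∈ E.toFinite.toFinset, R x y) / (∑ x, R x y)
        ≤ (∑ x ∈ F.toFinite.toFinset, R x y) / (∑ x, R x y) := by
    intro y E F hEF
    gcongr
    · exact Finset.sum_nonneg (fun x _ => hRnn x y)
    · exact fun i _ _ => hRnn i y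
  have hL : L = ![2/3, 1/2, 1/2, 1/2, 4/9] := by
    funext y
    fin_cases y
    · show L 0 = _
      simp only [L]
      rw [key_top R A hμmono 0 {0,1,2,3} {0,1,2,3} {0,1,2,3} {0,1,2,3} {0,1,2,3,4}
        (by intro z; fin_cases z <;> norm_num [IL, hR, A, min_def, Matrix.cons_val_two, Matrix.cons_val_three, Matrix.cons_val_four] <;> decide)
        (by intro z; fin_cases z <;> norm_num [IL, hR, A, min_def, Matrix.cons_val_two, Matrix.cons_val_three, Matrix.cons_val_four] <;> decide)
        (by intro z; fin_cases z <;> norm_num [IL, hR, A, min_def, Matrix.cons_val_two, Matrix.cons_val_three, Matrix.cons_val_four] <;> decide)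
        (by intro z; fin_cases z <;> norm_num [IL, hR, A, min_def, Matrix.cons_val_two, Matrix.cons_val_three, Matrix.cons_val_four] <;> decide)
        (by intro z; fin_cases z <;> norm_num [IL, hR, A, min_def, Matrix.cons_val_two, Matrix.cons_val_three, Matrix.cons_val_four] <;> decide)]
      norm_num [IL, hR, A, Fin.sum_univ_five, sum4, sum014, sumall, min_def, max_def, Matrix.cons_val_two, Matrix.cons_val_three, Matrix.cons_val_four]
    · show L 1 = _
      simp only [L]
      rw [key_top R A hμmono 1 {0,1,4} {0,1,4} {0,1,2,3,4} {0,1,2,3,4} {0,1,4}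
        (by intro z; fin_cases z <;> norm_num [IL, hR, A, min_def, Matrix.cons_val_two, Matrix.cons_val_three, Matrix.cons_val_four] <;> decide)
        (by intro z; fin_cases z <;> norm_num [IL, hR, A, min_def, Matrix.cons_val_two, Matrix.cons_val_three, Matrix.cons_val_four] <;> decide)
        (by intro z; fin_cases z <;> norm_num [IL, hR, A, min_def, Matrix.cons_val_two, Matrix.cons_val_three, Matrix.cons_val_four] <;> decide)
        (by intro z; fin_cases z <;> norm_num [IL, hR, A, min_def, Matrix.cons_val_two, Matrix.cons_val_three, Matrix.cons_val_four] <;> decide)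
        (by intro z; fin_cases z <;> norm_num [IL, hR, A, min_def, Matrix.cons_val_two, Matrix.cons_val_three, Matrix.cons_val_four] <;> decide)]
      norm_num [IL, hR, A, Fin.sum_univ_five, sum4, sum014, sumall, min_def, max_def, Matrix.cons_val_two, Matrix.cons_val_three, Matrix.cons_val_four]
    · show L 2 = _
      simp only [L]
      rw [key_top R A hμmono 2 {0,1,4} {0,1,4} {0,1,2,3,4} {0,1,2,3,4} {0,1,4}
        (by intro z; fin_cases z <;> norm_num [IL, hR, A, min_def, Matrix.cons_val_two, Matrix.cons_val_three, Matrix.cons_val_four] <;> decide)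
        (by intro z; fin_cases z <;> norm_num [IL, hR, A, min_def, Matrix.cons_val_two, Matrix.cons_val_three, Matrix.cons_val_four] <;> decide)
        (by intro z; fin_cases z <;> norm_num [IL, hR, A, min_def, Matrix.cons_val_two, Matrix.cons_val_three, Matrix.cons_val_four] <;> decide)
        (by intro z; fin_cases z <;> norm_num [IL, hR, A, min_def, Matrix.cons_val_two, Matrix.cons_val_three, Matrix.cons_val_four] <;> decide)
        (by intro z; fin_cases z <;> norm_num [IL, hR, A, min_def, Matrix.cons_val_two, Matrix.cons_val_three, Matrix.cons_val_four] <;> decide)]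
      norm_num [IL, hR, A, Fin.sum_univ_five, sum4, sum014, sumall, min_def, max_def, Matrix.cons_val_two, Matrix.cons_val_three, Matrix.cons_val_four]
    · show L 3 = _
      simp only [L]
      rw [key_top R A hμmono 3 {0,1,4} {0,1,4} {0,1,2,3,4} {0,1,2,3,4} {0,1,4}
        (by intro z; fin_cases z <;> norm_num [IL, hR, A, min_def, Matrix.cons_val_two, Matrix.cons_val_three, Matrix.cons_val_four] <;> decide)
        (by intro z; fin_cases z <;> norm_num [IL, hR, A, min_def, Matrix.cons_val_two, Matrix.cons_val_three, Matrix.cons_val_four] <;> decide)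
        (by intro z; fin_cases z <;> norm_num [IL, hR, A, min_def, Matrix.cons_val_two, Matrix.cons_val_three, Matrix.cons_val_four] <;> decide)
        (by intro z; fin_cases z <;> norm_num [IL, hR, A, min_def, Matrix.cons_val_two, Matrix.cons_val_three, Matrix.cons_val_four] <;> decide)
        (by intro z; fin_cases z <;> norm_num [IL, hR, A, min_def, Matrix.cons_val_two, Matrix.cons_val_three, Matrix.cons_val_four] <;> decide)]
      norm_num [IL, hR, A, Fin.sum_univ_five, sum4, sum014, sumall, min_def, max_def, Matrix.cons_val_two, Matrix.cons_val_three, Matrix.cons_val_four]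
    · show L 4 = _
      simp only [L]
      rw [key_top R A hμmono 4 {0,1,2,3} {0,1,2,3} {0,1,2,3} {0,1,2,3} {0,1,2,3,4}
        (by intro z; fin_cases z <;> norm_num [IL, hR, A, min_def, Matrix.cons_val_two, Matrix.cons_val_three, Matrix.cons_val_four] <;> decide)
        (by intro z; fin_cases z <;> norm_num [IL, hR, A, min_def, Matrix.cons_val_two, Matrix.cons_val_three, Matrix.cons_val_four] <;> decide)
        (by intro z; fin_cases z <;> norm_num [IL, hR, A, min_def, Matrix.cons_val_two, Matrix.cons_val_three, Matrix.cons_val_four] <;> decide)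
        (by intro z; fin_cases z <;> norm_num [IL, hR, A, min_def, Matrix.cons_val_two, Matrix.cons_val_three, Matrix.cons_val_four] <;> decide)
        (by intro z; fin_cases z <;> norm_num [IL, hR, A, min_def, Matrix.cons_val_two, Matrix.cons_val_three, Matrix.cons_val_four] <;> decide)]
      norm_num [IL, hR, A, Fin.sum_univ_five, sum4, sum014, sumall, min_def, max_def, Matrix.cons_val_two, Matrix.cons_val_three, Matrix.cons_val_four]
  have hinf : Finset.univ.inf' Finset.univ_nonempty (fun x => IL (R x 0) (L x)) = 29/45 := by
    rw [inf5]
    norm_num [IL, hR, hL, min_def, Matrix.cons_val_two, Matrix.cons_val_three, Matrix.cons_val_four]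
  refine ⟨hequiv, hL, hinf, by simp [hL], ?_, ?_⟩
  · rw [hinf]
    simp only [hL]
    norm_num
  · intro hG
    have h0 := hG 0
    rw [show L 0 = 2/3 by simp [hL]] at h0
    have hb : sSup {v | ∃ l ∈ Set.Icc (0:ℝ) 1, ∃ x, (∀ z, TL l (R x z) ≤ L z) ∧ v = TL l (R x 0)}
        ≤ 29/45 := by
      apply Real.sSup_le _ (by norm_num)
      rintro v ⟨l, ⟨hl0, hl1⟩, x, hgr, rfl⟩
      have h4 := hgr 4
      rw [hL] at h4
      fin_cases x <;>
        simp only [TL, hR, hL, Matrix.cons_val_two, Matrix.cons_val_three, Matrix.cons_val_four] at h4 ⊢ <;>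
        norm_num [Matrix.cons_val_two, Matrix.cons_val_four, Matrix.vecHead, Matrix.vecTail] at h4 ⊢ <;>
        linarith
    rw [← h0] at hb
    norm_num at hb
end
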